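/- Let Q ∈ ℝ^{r×r} be a matrix satisfying Qᵀe = e and, for each row i, Q(i,:)·e ≥ ‖Q(i,:)‖₂. Then |det(Q)| ≤ 1. Moreover, if |det(Q)| = 1, then for all i, Q(i,:)·e = ‖Q(i,:)‖₂ = 1 and Q is an orthogonal matrix. -/

import Mathlib

open Matrix BigOperators

/-- AM-GM style: nonneg reals with sum ≤ r have product ≤ 1. -/
lemma amgm_prod_le_one {r : ℕ} (z : Fin r → ℝ) (hz : ∀ i, 0 ≤ z i)
    (hsum : ∑ i, z i ≤ r) : ∏ i, z i ≤ 1 := by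
  calc ∏ i, z i ≤ ∏ i, Real.exp (z i - 1) := by
        refine Finset.prod_le_prod (fun i _ => hz i) (fun i _ => ?_)
        have := Real.add_one_le_exp (z i - 1); linarith
    _ = Real.exp (∑ i, (z i - 1)) := (Real.exp_sum _ _).symm
    _ ≤ 1 := by
        rw [Real.exp_le_one_iff, Finset.sum_sub_distrib]
        simp only [Finset.sum_const, Finset.card_univ, Fintype.card_fin, nsmul_eq_mul, mul_one]
        linarith

/-- Equality case of AM-GM: if moreover the product is 1, all terms are 1. -/
lemma amgm_eq_one {r : ℕ} (z : Fin r → ℝ) (hz : ∀ i, 0 ≤ z i)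
    (hsum : ∑ i, z i ≤ r) (hprod : ∏ i, z i = 1) : ∀ i, z i = 1 := by
  have hpos : ∀ i, 0 < z i := by
    intro i
    rcases (hz i).lt_or_eq with h | h
    · exact h
    · exfalso
      have : ∏ i, z i = 0 := Finset.prod_eq_zero (Finset.mem_univ i) h.symm
      rw [this] at hprod; norm_num at hprod
  by_contra hc
  push_neg at hc
  obtain ⟨i0, hi0⟩ := hc
  have hstrict : z i0 < Real.exp (z i0 - 1) := by
    have := Real.add_one_lt_exp (x := z i0 - 1) (by intro h; exact hi0 (by linarith))
    linarith
  have h1 : ∏ i, z i < ∏ i, Real.exp (z i - 1) := by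
    refine Finset.prod_lt_prod (fun i _ => hpos i) (fun i _ => ?_)
      ⟨i0, Finset.mem_univ i0, hstrict⟩
    have := Real.add_one_le_exp (z i - 1); linarith
  have h2 : ∏ i, Real.exp (z i - 1) ≤ 1 := by
    rw [← Real.exp_sum, Real.exp_le_one_iff, Finset.sum_sub_distrib]
    simp only [Finset.sum_const, Finset.card_univ, Fintype.card_fin, nsmul_eq_mul, mul_one]
    linarith
  rw [hprod] at h1; linarith

/-- Trace of a real hermitian matrix is the sum of its eigenvalues. -/
lemma trace_eq_sum_eigen {r : ℕ} {M : Matrix (Fin r) (Fin r) ℝ} (hM : M.IsHermitian) :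
    M.trace = ∑ i, hM.eigenvalues i := by
  conv_lhs => rw [hM.spectral_theorem, Unitary.conjStarAlgAut_apply]
  rw [Matrix.trace_mul_cycle]
  rw [show (star (hM.eigenvectorUnitary : Matrix (Fin r) (Fin r) ℝ)) *
      (hM.eigenvectorUnitary : Matrix (Fin r) (Fin r) ℝ) = 1 from
    Matrix.mem_unitaryGroup_iff'.mp hM.eigenvectorUnitary.2, one_mul, Matrix.trace_diagonal]
  simp [Function.comp]

/-- Hadamard's inequality (squared form) for real matrices. -/
lemma hadamard_sq {r : ℕ} (A : Matrix (Fin r) (Fin r) ℝ) :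
    A.det ^ 2 ≤ ∏ i, ∑ j, A i j ^ 2 := by
  by_cases hzero : ∃ i, ∑ j, A i j ^ 2 = 0
  · obtain ⟨i, hi⟩ := hzero
    have hrow0 : ∀ j, A i j = 0 := by
      intro j
      have h := (Finset.sum_eq_zero_iff_of_nonneg (fun j _ => sq_nonneg (A i j))).mp hi j
        (Finset.mem_univ j)
      exact pow_eq_zero_iff (two_ne_zero) |>.mp h
    rw [Matrix.det_eq_zero_of_row_eq_zero i hrow0]
    simpa using Finset.prod_nonneg (fun i (_ : i ∈ Finset.univ) =>
      Finset.sum_nonneg fun j _ => sq_nonneg (A i j))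
  · push_neg at hzero
    have hn2pos : ∀ i, 0 < ∑ j, A i j ^ 2 :=
      fun i => (Finset.sum_nonneg fun j _ => sq_nonneg _).lt_of_ne (Ne.symm (hzero i))
    set d : Fin r → ℝ := fun i => (Real.sqrt (∑ j, A i j ^ 2))⁻¹ with hd
    have hdpos : ∀ i, 0 < d i := fun i => inv_pos.mpr (Real.sqrt_pos.mpr (hn2pos i))
    set B : Matrix (Fin r) (Fin r) ℝ := Matrix.diagonal d * A with hB
    have hBij : ∀ i j, B i j = d i * A i j := fun i j => by
      rw [hB, Matrix.diagonal_mul]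
    have hpsd := Matrix.posSemidef_self_mul_conjTranspose B
    have hherm : (B * Bᴴ).IsHermitian := hpsd.isHermitian
    have htrace : (B * Bᴴ).trace = r := by
      have hdiag : ∀ i, (B * Bᴴ) i i = 1 := by
        intro i
        have : (B * Bᴴ) i i = ∑ j, (d i * A i j) ^ 2 := by
          simp [Matrix.mul_apply, Matrix.conjTranspose_apply, hBij, sq, mul_comm]
        rw [this]
        have : ∑ j, (d i * A i j) ^ 2 = d i ^ 2 * ∑ j, A i j ^ 2 := by
          rw [Finset.mul_sum]; congr 1; funext j; ring
        rw [this, hd]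
        have hsq : (Real.sqrt (∑ j, A i j ^ 2)) ^ 2 = ∑ j, A i j ^ 2 :=
          Real.sq_sqrt (le_of_lt (hn2pos i))
        rw [inv_pow, hsq]
        exact inv_mul_cancel₀ (ne_of_gt (hn2pos i))
      rw [Matrix.trace]
      simp only [Matrix.diag]
      rw [Finset.sum_congr rfl (fun i _ => hdiag i)]
      simp
    have heigsum : ∑ i, hherm.eigenvalues i = r := by
      rw [← trace_eq_sum_eigen hherm, htrace]
    have heigprod : ∏ i, hherm.eigenvalues i = (B * Bᴴ).det := by
      rw [hherm.det_eq_prod_eigenvalues]; norm_num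
    have hdetG : (B * Bᴴ).det = B.det ^ 2 := by
      rw [Matrix.det_mul, Matrix.det_conjTranspose, sq]; simp
    have hle1 : (B * Bᴴ).det ≤ 1 := by
      rw [← heigprod]
      exact amgm_prod_le_one _ (fun i => hpsd.eigenvalues_nonneg i) (le_of_eq heigsum)
    have hdetB : B.det = (∏ i, d i) * A.det := by
      rw [hB, Matrix.det_mul, Matrix.det_diagonal]
    have hkey : (∏ i, d i) ^ 2 * A.det ^ 2 ≤ 1 := by
      rw [hdetG, hdetB] at hle1; nlinarith [hle1]
    have hprodd : (∏ i, d i) ^ 2 = (∏ i, ∑ j, A i j ^ 2)⁻¹ := by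
      rw [← Finset.prod_pow, ← Finset.prod_inv_distrib]
      congr 1; funext i
      rw [hd]
      simp only
      rw [← Real.sqrt_inv]
      exact Real.sq_sqrt (by positivity)
    have hprodn2pos : 0 < ∏ i, ∑ j, A i j ^ 2 := Finset.prod_pos fun i _ => hn2pos i
    rw [hprodd] at hkey
    calc A.det ^ 2 = (∏ i, ∑ j, A i j ^ 2) * ((∏ i, ∑ j, A i j ^ 2)⁻¹ * A.det ^ 2) := by
          field_simp
      _ ≤ (∏ i, ∑ j, A i j ^ 2) * 1 := by
          apply mul_le_mul_of_nonneg_left hkey (le_of_lt hprodn2pos)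
      _ = ∏ i, ∑ j, A i j ^ 2 := mul_one _

theorem stmt4 {r : ℕ} (Q : Matrix (Fin r) (Fin r) ℝ)
    (hcol : ∀ j, ∑ i, Q i j = 1)
    (hrow : ∀ i, Real.sqrt (∑ j, (Q i j) ^ 2) ≤ ∑ j, Q i j) :
    |Q.det| ≤ 1 ∧
    (|Q.det| = 1 →
      (∀ i, ∑ j, Q i j = 1 ∧ Real.sqrt (∑ j, (Q i j) ^ 2) = 1) ∧ Qᵀ * Q = 1) := by
  have hn2nonneg : ∀ i, (0:ℝ) ≤ ∑ j, Q i j ^ 2 :=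
    fun i => Finset.sum_nonneg fun j _ => sq_nonneg _
  have hsnonneg : ∀ i, (0:ℝ) ≤ ∑ j, Q i j :=
    fun i => (Real.sqrt_nonneg _).trans (hrow i)
  have hssum : ∑ i, ∑ j, Q i j = (r:ℝ) := by
    rw [show ∑ i, ∑ j, Q i j = ∑ j, ∑ i, Q i j from Finset.sum_comm]; simp [hcol]
  have hn2le : ∀ i, ∑ j, Q i j ^ 2 ≤ (∑ j, Q i j) ^ 2 := by
    intro i
    have h1 := Real.sq_sqrt (hn2nonneg i)
    nlinarith [hrow i, Real.sqrt_nonneg (∑ j, Q i j ^ 2)]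
  have hprod_s : ∏ i, ∑ j, Q i j ≤ 1 :=
    amgm_prod_le_one _ hsnonneg (le_of_eq hssum)
  have hs_prod_nonneg : 0 ≤ ∏ i, ∑ j, Q i j := Finset.prod_nonneg fun i _ => hsnonneg i
  have hprod_n2_le : ∏ i, ∑ j, Q i j ^ 2 ≤ (∏ i, ∑ j, Q i j) ^ 2 := by
    rw [← Finset.prod_pow]
    exact Finset.prod_le_prod (fun i _ => hn2nonneg i) (fun i _ => hn2le i)
  have hdet2 : Q.det ^ 2 ≤ ∏ i, ∑ j, Q i j ^ 2 := hadamard_sq Q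
  have hdet2_le : Q.det ^ 2 ≤ 1 := by nlinarith
  constructor
  · nlinarith [abs_nonneg Q.det, sq_abs Q.det]
  · intro hdet
    have hdet2_eq : Q.det ^ 2 = 1 := by rw [← sq_abs, hdet]; norm_num
    have hps : ∏ i, ∑ j, Q i j = 1 := by nlinarith
    have hsi : ∀ i, ∑ j, Q i j = 1 := amgm_eq_one _ hsnonneg (le_of_eq hssum) hps
    have hpn2 : ∏ i, ∑ j, Q i j ^ 2 = 1 := by nlinarith
    have hn2sum : ∑ i, ∑ j, Q i j ^ 2 ≤ (r:ℝ) := by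
      calc ∑ i, ∑ j, Q i j ^ 2 ≤ ∑ i, (∑ j, Q i j) ^ 2 :=
            Finset.sum_le_sum fun i _ => hn2le i
        _ = r := by simp [hsi]
    have hn2i : ∀ i, ∑ j, Q i j ^ 2 = 1 := amgm_eq_one _ hn2nonneg hn2sum hpn2
    refine ⟨fun i => ⟨hsi i, by rw [hn2i i]; exact Real.sqrt_one⟩, ?_⟩
    -- orthogonality
    have hpsd := Matrix.posSemidef_self_mul_conjTranspose Q
    have hherm : (Q * Qᴴ).IsHermitian := hpsd.isHermitian
    have htrace : (Q * Qᴴ).trace = r := by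
      have hdiag : ∀ i, (Q * Qᴴ) i i = 1 := by
        intro i
        have h : (Q * Qᴴ) i i = ∑ j, Q i j ^ 2 := by
          simp [Matrix.mul_apply, Matrix.conjTranspose_apply, sq]
        rw [h, hn2i i]
      rw [Matrix.trace]
      simp only [Matrix.diag]
      rw [Finset.sum_congr rfl (fun i _ => hdiag i)]
      simp
    have heigsum : ∑ i, hherm.eigenvalues i = r := by
      rw [← trace_eq_sum_eigen hherm, htrace]
    have heigprod : ∏ i, hherm.eigenvalues i = 1 := by
      have h := hherm.det_eq_prod_eigenvalues
      rw [Matrix.det_mul, Matrix.det_conjTranspose] at h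
      simp only [star_trivial] at h
      rw [← sq, hdet2_eq] at h
      exact_mod_cast h.symm
    have heig1 : ∀ i, hherm.eigenvalues i = 1 :=
      amgm_eq_one _ (fun i => hpsd.eigenvalues_nonneg i) (le_of_eq heigsum) heigprod
    have hG1 : Q * Qᴴ = 1 := by
      rw [hherm.spectral_theorem]
      have hD : Matrix.diagonal (RCLike.ofReal ∘ hherm.eigenvalues) =
          (1 : Matrix (Fin r) (Fin r) ℝ) := by
        have h : (RCLike.ofReal ∘ hherm.eigenvalues : Fin r → ℝ) = fun _ => 1 := by
          funext i; exact heig1 i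
        rw [h, Matrix.diagonal_one]
      rw [hD, Unitary.conjStarAlgAut_apply, mul_one]
      exact Matrix.mem_unitaryGroup_iff.mp hherm.eigenvectorUnitary.2
    have h2 : Qᴴ * Q = 1 := mul_eq_one_comm.mp hG1
    rwa [Matrix.conjTranspose_eq_transpose_of_trivial] at h2
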